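/- Let n ≥ 2 be an integer, q > 0, and a_2, …, a_n ≥ 0 with a_n > 0. For r > 0 let E(r) > 0 be the unique solution of (1 + Σ_{k=2}^n (k a_k/2^{k−1}) E^{2(k−1)}) E = q/r², and define the Hamiltonian energy density H(r) = (1 + Σ_{k=2}^n (k a_k/2^{k−1}) E(r)^{2(k−1)}) E(r)² − (E(r)²/2 + Σ_{k=2}^n (a_k/2^k) E(r)^{2k}). Then lim_{r→∞} r⁴ H(r) = q²/2 and lim_{r→0⁺} r^{4n/(2n−1)} H(r) = (2n−1) ((q²/(2n²))^n / a_n)^{1/(2n−1)}. -/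

import Mathlib

open Topology Filter

/-- Asymptotics of the Hamiltonian energy density of an electric point charge in the
polynomial model: `H(r) ~ q²/(2r⁴)` at infinity and
`H(r) ~ (2n−1)((q²/(2n²))ⁿ/a_n)^{1/(2n−1)} r^{-4n/(2n−1)}` at the origin. -/
theorem stmt3 (n : ℕ) (hn : 2 ≤ n) (q : ℝ) (hq : 0 < q)
    (a : ℕ → ℝ) (ha : ∀ k, 2 ≤ k → k ≤ n → 0 ≤ a k) (han : 0 < a n)
    (E : ℝ → ℝ) (hE : ∀ r, 0 < r → 0 < E r)
    (heq : ∀ r, 0 < r →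
      (1 + ∑ k ∈ Finset.Icc 2 n, ((k : ℝ) * a k / 2 ^ (k - 1)) * E r ^ (2 * (k - 1))) * E r
        = q / r ^ 2)
    (H : ℝ → ℝ)
    (hH : ∀ r, 0 < r → H r =
      (1 + ∑ k ∈ Finset.Icc 2 n, ((k : ℝ) * a k / 2 ^ (k - 1)) * E r ^ (2 * (k - 1))) * E r ^ 2
        - (E r ^ 2 / 2 + ∑ k ∈ Finset.Icc 2 n, (a k / 2 ^ k) * E r ^ (2 * k))) :
    Tendsto (fun r => r ^ 4 * H r) atTop (𝓝 (q ^ 2 / 2)) ∧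
    Tendsto (fun r => r ^ ((4 * (n : ℝ)) / (2 * (n : ℝ) - 1)) * H r) (𝓝[>] (0 : ℝ))
      (𝓝 ((2 * (n : ℝ) - 1) *
        ((q ^ 2 / (2 * (n : ℝ) ^ 2)) ^ n / a n) ^ ((1 : ℝ) / (2 * (n : ℝ) - 1)))) := by
  have hn2 : (2:ℝ) ≤ (n:ℝ) := by exact_mod_cast hn
  set D : ℝ := 2 * (n:ℝ) - 1 with hDdef
  have hD : 0 < D := by simp only [hDdef]; linarith
  set γ : ℝ := 2 * (n:ℝ) / D with hγdef
  set c : ℕ → ℝ := fun k => (k : ℝ) * a k / 2 ^ (k - 1) with hcdef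
  set g : ℝ → ℝ := fun x => 1 + ∑ k ∈ Finset.Icc 2 n, c k * x ^ (2 * (k - 1)) with hgdef
  set b : ℕ → ℝ := fun k => (2 * (k:ℝ) - 1) * a k / 2 ^ k with hbdef
  set h : ℝ → ℝ := fun x => x ^ 2 / 2 + ∑ k ∈ Finset.Icc 2 n, b k * x ^ (2 * k) with hhdef
  -- basic positivity facts
  have hc0 : ∀ k ∈ Finset.Icc 2 n, 0 ≤ c k := by
    intro k hk
    simp only [Finset.mem_Icc] at hk
    have := ha k hk.1 hk.2
    simp only [hcdef]
    positivity
  have hcn : 0 < c n := by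
    simp only [hcdef]
    have : (0:ℝ) < (n:ℝ) := by linarith
    positivity
  have hbn : 0 < b n := by
    simp only [hbdef]
    have h1 : (0:ℝ) < 2 * (n:ℝ) - 1 := by linarith
    positivity
  have hg1 : ∀ x : ℝ, 1 ≤ g x := by
    intro x
    simp only [hgdef]
    have : 0 ≤ ∑ k ∈ Finset.Icc 2 n, c k * x ^ (2 * (k - 1)) := by
      apply Finset.sum_nonneg
      intro k hk
      have h1 := hc0 k hk
      have h2 : (0:ℝ) ≤ x ^ (2 * (k - 1)) := by rw [pow_mul]; positivity
      exact mul_nonneg h1 h2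
    linarith
  have hgpos : ∀ x : ℝ, 0 < g x := fun x => lt_of_lt_of_le one_pos (hg1 x)
  -- fold the hypotheses
  have hgE : ∀ r, 0 < r → g (E r) * E r = q / r ^ 2 := by
    intro r hr
    simpa only [hgdef, hcdef] using heq r hr
  have hterm : ∀ (x : ℝ), ∀ k ∈ Finset.Icc 2 n,
      ((k : ℝ) * a k / 2 ^ (k - 1)) * x ^ (2 * (k - 1)) * x ^ 2 - (a k / 2 ^ k) * x ^ (2 * k)
        = (2 * (k:ℝ) - 1) * a k / 2 ^ k * x ^ (2 * k) := by
    intro x k hk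
    obtain ⟨hk2, hkn⟩ := Finset.mem_Icc.mp hk
    have e1 : 2 * (k - 1) + 2 = 2 * k := by omega
    have e2 : (2:ℝ) ^ k = 2 ^ (k - 1) * 2 := by
      rw [← pow_succ]
      congr 1
      omega
    rw [mul_assoc, ← pow_add, e1, e2]
    have h2 : ((2:ℝ) ^ (k - 1)) ≠ 0 := by positivity
    field_simp
  have hHh : ∀ r, 0 < r → H r = h (E r) := by
    intro r hr
    rw [hH r hr]
    simp only [hhdef, hbdef]
    rw [add_mul, one_mul, Finset.sum_mul]
    have hs : ∑ k ∈ Finset.Icc 2 n,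
        (((k : ℝ) * a k / 2 ^ (k - 1)) * E r ^ (2 * (k - 1)) * E r ^ 2
          - (a k / 2 ^ k) * E r ^ (2 * k))
        = ∑ k ∈ Finset.Icc 2 n, (2 * (k:ℝ) - 1) * a k / 2 ^ k * E r ^ (2 * k) :=
      Finset.sum_congr rfl (fun k hk => hterm (E r) k hk)
    rw [Finset.sum_sub_distrib] at hs
    linarith
  -- part 1 : E tends to 0 at infinity
  have hE0 : Tendsto E atTop (𝓝 0) := by
    have hbound : Tendsto (fun r : ℝ => q / r ^ 2) atTop (𝓝 0) :=
      tendsto_const_nhds.div_atTop (tendsto_pow_atTop two_ne_zero)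
    apply squeeze_zero' ?_ ?_ hbound
    · filter_upwards [eventually_gt_atTop (0:ℝ)] with r hr
      exact (hE r hr).le
    · filter_upwards [eventually_gt_atTop (0:ℝ)] with r hr
      calc E r = 1 * E r := (one_mul _).symm
        _ ≤ g (E r) * E r := mul_le_mul_of_nonneg_right (hg1 _) (hE r hr).le
        _ = q / r ^ 2 := hgE r hr
  -- identity for r^4 * H r
  set φ : ℝ → ℝ := fun x => (q / g x) ^ 2 * (1 / 2 + ∑ k ∈ Finset.Icc 2 n, b k * x ^ (2 * (k - 1)))
    with hφdef
  have hφE : ∀ r : ℝ, 0 < r → r ^ 4 * H r = φ (E r) := by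
    intro r hr
    have hq' : g (E r) * E r * r ^ 2 = q := by
      rw [hgE r hr]
      field_simp
    have key2 : r ^ 2 * E r = q / g (E r) := by
      rw [eq_div_iff (hgpos (E r)).ne']
      linear_combination hq'
    rw [hHh r hr]
    simp only [hφdef, hhdef]
    rw [← key2, mul_add, mul_add, Finset.mul_sum, Finset.mul_sum]
    congr 1
    · ring
    · refine Finset.sum_congr rfl (fun k hk => ?_)
      obtain ⟨hk2, hkn⟩ := Finset.mem_Icc.mp hk
      rw [show 2 * k = 2 * (k - 1) + 2 from by omega, pow_add]
      ring
  have hgc : Continuous g := by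
    simp only [hgdef]
    exact continuous_const.add
      (continuous_finset_sum _ fun k _ => continuous_const.mul (continuous_pow _))
  have hφcont : ContinuousAt φ 0 := by
    simp only [hφdef]
    exact ((continuousAt_const.div hgc.continuousAt (hgpos 0).ne').pow 2).mul
      (continuousAt_const.add
        (Continuous.continuousAt
          (continuous_finset_sum _ fun k _ => continuous_const.mul (continuous_pow _))))
  have hz : ∀ d : ℕ → ℝ, ∑ k ∈ Finset.Icc 2 n, d k * (0:ℝ) ^ (2 * (k - 1)) = 0 := by
    intro d
    refine Finset.sum_eq_zero (fun k hk => ?_)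
    obtain ⟨hk2, hkn⟩ := Finset.mem_Icc.mp hk
    rw [zero_pow (by omega)]
    ring
  have hφ0 : φ 0 = q ^ 2 / 2 := by
    simp only [hφdef, hgdef]
    rw [hz c, hz b, add_zero, add_zero, div_one]
    ring
  have part1 : Tendsto (fun r => r ^ 4 * H r) atTop (𝓝 (q ^ 2 / 2)) := by
    have := (hφ0 ▸ hφcont.tendsto).comp hE0
    refine this.congr' ?_
    filter_upwards [eventually_gt_atTop (0:ℝ)] with r hr
    exact (hφE r hr).symm
  -- part 2 : E tends to ∞ at 0⁺
  have hgmono : ∀ x y : ℝ, 0 ≤ x → x ≤ y → g x ≤ g y := by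
    intro x y hx hxy
    simp only [hgdef]
    refine add_le_add le_rfl (Finset.sum_le_sum fun k hk => ?_)
    exact mul_le_mul_of_nonneg_left (pow_le_pow_left₀ hx hxy _) (hc0 k hk)
  have hEtop : Tendsto E (𝓝[>] (0:ℝ)) atTop := by
    rw [tendsto_atTop]
    intro C
    set C' : ℝ := max C 1 with hC'def
    have hC' : 0 < C' := lt_of_lt_of_le one_pos (le_max_right _ _)
    set M : ℝ := g C' * C' with hMdef
    have hM : 0 < M := mul_pos (hgpos _) hC'
    have hmem : Set.Ioo (0:ℝ) (Real.sqrt (q / M)) ∈ 𝓝[>] (0:ℝ) :=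
      Ioo_mem_nhdsGT_of_mem ⟨le_rfl, Real.sqrt_pos.mpr (div_pos hq hM)⟩
    filter_upwards [hmem] with r hr
    obtain ⟨hr0, hrs⟩ := hr
    by_contra hCE
    push_neg at hCE
    have hEC' : E r ≤ C' := le_trans hCE.le (le_max_left _ _)
    have hle : g (E r) * E r ≤ M := by
      rw [hMdef]
      exact mul_le_mul (hgmono _ _ (hE r hr0).le hEC') hEC' (hE r hr0).le (hgpos _).le
    rw [hgE r hr0] at hle
    have hr2 : r ^ 2 < q / M := (Real.lt_sqrt hr0.le).mp hrs
    have h2 : q ≤ M * r ^ 2 := by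
      rw [div_le_iff₀ (by positivity)] at hle
      linarith
    have h3 : M * r ^ 2 < q := by
      have := mul_lt_mul_of_pos_left hr2 hM
      rwa [mul_div_cancel₀ _ hM.ne'] at this
    linarith
  -- limits of the normalized pieces
  have key : ∀ d : ℕ → ℝ,
      Tendsto (fun x : ℝ => ∑ k ∈ Finset.Icc 2 n, d k / x ^ (2 * (n - k))) atTop (𝓝 (d n)) := by
    intro d
    have hlim : Tendsto (fun x : ℝ => ∑ k ∈ Finset.Icc 2 n, d k / x ^ (2 * (n - k))) atTop
        (𝓝 (∑ k ∈ Finset.Icc 2 n, if k = n then d n else 0)) := by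
      refine tendsto_finset_sum _ (fun k hk => ?_)
      rcases eq_or_ne k n with rfl | hkn
      · simp only [if_pos rfl, Nat.sub_self, mul_zero, pow_zero, div_one]
        exact tendsto_const_nhds
      · simp only [if_neg hkn]
        have hkln : k < n := lt_of_le_of_ne (Finset.mem_Icc.mp hk).2 hkn
        have hm : 2 * (n - k) ≠ 0 := by omega
        have h1 := (tendsto_pow_atTop hm : Tendsto (fun x : ℝ => x ^ (2 * (n - k))) atTop atTop).inv_tendsto_atTop
        have h2 := h1.const_mul (d k)
        rw [mul_zero] at h2
        refine h2.congr (fun x => ?_)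
        simp [div_eq_mul_inv]
    rwa [Finset.sum_ite_eq' (Finset.Icc 2 n) n (fun _ => d n),
      if_pos (Finset.mem_Icc.mpr ⟨hn, le_rfl⟩)] at hlim
  have hinv : ∀ m : ℕ, m ≠ 0 → ∀ e : ℝ, Tendsto (fun x : ℝ => e / x ^ m) atTop (𝓝 0) := by
    intro m hm e
    have h1 := (tendsto_pow_atTop hm : Tendsto (fun x : ℝ => x ^ m) atTop atTop).inv_tendsto_atTop
    have h2 := h1.const_mul e
    rw [mul_zero] at h2
    exact h2.congr (fun x => by simp [div_eq_mul_inv])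
  have hu : Tendsto (fun x : ℝ => g x * x / x ^ (2 * n - 1)) atTop (𝓝 (c n)) := by
    have hlim := (hinv (2 * (n - 1)) (by omega) 1).add (key c)
    rw [zero_add] at hlim
    refine hlim.congr' ?_
    filter_upwards [eventually_ge_atTop (1:ℝ)] with x hx1
    have hx : (0:ℝ) < x := lt_of_lt_of_le one_pos hx1
    simp only [hgdef]
    rw [add_mul, one_mul, Finset.sum_mul, add_div, Finset.sum_div]
    congr 1
    · rw [show 2 * n - 1 = 1 + 2 * (n - 1) from by omega, pow_add, pow_one]
      rw [div_eq_div_iff (by positivity) (by positivity)]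
      ring
    · refine (Finset.sum_congr rfl (fun k hk => ?_)).symm
      obtain ⟨hk2, hkn⟩ := Finset.mem_Icc.mp hk
      rw [show 2 * n - 1 = (2 * (k - 1) + 1) + 2 * (n - k) from by omega, pow_add]
      rw [div_eq_div_iff (by positivity) (by positivity)]
      rw [pow_add, pow_one]
      ring
  have hv : Tendsto (fun x : ℝ => h x / x ^ (2 * n)) atTop (𝓝 (b n)) := by
    have hlim := (hinv (2 * (n - 1)) (by omega) (1/2)).add (key b)
    rw [zero_add] at hlim
    refine hlim.congr' ?_
    filter_upwards [eventually_ge_atTop (1:ℝ)] with x hx1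
    have hx : (0:ℝ) < x := lt_of_lt_of_le one_pos hx1
    simp only [hhdef]
    rw [add_div, Finset.sum_div]
    congr 1
    · rw [show 2 * n = 2 + 2 * (n - 1) from by omega, pow_add]
      rw [div_eq_div_iff (by positivity) (by positivity)]
      ring
    · refine (Finset.sum_congr rfl (fun k hk => ?_)).symm
      obtain ⟨hk2, hkn⟩ := Finset.mem_Icc.mp hk
      rw [show 2 * n = 2 * k + 2 * (n - k) from by omega, pow_add]
      rw [div_eq_div_iff (by positivity) (by positivity)]
      ring
  set ψ : ℝ → ℝ := fun x => (q / (g x * x)) ^ γ * h x with hψdef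
  have hcastD : ((2 * n - 1 : ℕ) : ℝ) = D := by
    rw [hDdef, Nat.cast_sub (by omega : 1 ≤ 2 * n)]
    push_cast
    ring
  have hDγ : D * γ = 2 * (n : ℝ) := by
    rw [hγdef]
    field_simp
  have hψE : ∀ r : ℝ, 0 < r →
      r ^ ((4 * (n : ℝ)) / (2 * (n : ℝ) - 1)) * H r = ψ (E r) := by
    intro r hr
    have hgEr : 0 < g (E r) * E r := mul_pos (hgpos _) (hE r hr)
    have hq2 : r ^ 2 * (g (E r) * E r) = q := by
      rw [hgE r hr]
      field_simp
    have hr2 : r ^ 2 = q / (g (E r) * E r) := by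
      rw [eq_div_iff hgEr.ne']
      linear_combination hq2
    have hpow : r ^ ((4 * (n : ℝ)) / (2 * (n : ℝ) - 1)) = ((r ^ 2 : ℝ)) ^ γ := by
      rw [← Real.rpow_natCast r 2, ← Real.rpow_mul hr.le]
      congr 1
      rw [hγdef, hDdef]
      push_cast
      field_simp
      ring
    rw [hHh r hr]
    simp only [hψdef]
    rw [hpow, hr2]
  have hψlim : Tendsto ψ atTop (𝓝 (q ^ γ * b n / c n ^ γ)) := by
    have t1 : Tendsto (fun x : ℝ => (g x * x / x ^ (2 * n - 1)) ^ γ) atTop (𝓝 (c n ^ γ)) :=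
      hu.rpow_const (Or.inl hcn.ne')
    have t2 := ((hv.const_mul (q ^ γ)).div t1 (Real.rpow_pos_of_pos hcn γ).ne')
    refine t2.congr' ?_
    filter_upwards [eventually_ge_atTop (1:ℝ)] with x hx1
    have hx : (0:ℝ) < x := lt_of_lt_of_le one_pos hx1
    have hgx : 0 < g x * x := mul_pos (hgpos x) hx
    have hA : 0 < g x * x / x ^ (2 * n - 1) := div_pos hgx (by positivity)
    have h3 : ((x ^ (2 * n - 1) : ℝ)) ^ γ = x ^ (2 * n) := by
      rw [← Real.rpow_natCast x (2 * n - 1), ← Real.rpow_mul hx.le,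
        ← Real.rpow_natCast x (2 * n)]
      congr 1
      rw [hcastD, hDγ]
      push_cast
      ring
    have e2 : (g x * x) ^ γ = (g x * x / x ^ (2 * n - 1)) ^ γ * x ^ (2 * n) := by
      calc (g x * x) ^ γ = (g x * x / x ^ (2 * n - 1) * x ^ (2 * n - 1)) ^ γ := by
            rw [div_mul_cancel₀ _ (by positivity : (x:ℝ) ^ (2 * n - 1) ≠ 0)]
        _ = (g x * x / x ^ (2 * n - 1)) ^ γ * ((x ^ (2 * n - 1) : ℝ)) ^ γ :=
            Real.mul_rpow hA.le (by positivity)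
        _ = _ := by rw [h3]
    simp only [hψdef]
    rw [Real.div_rpow hq.le hgx.le, e2]
    have hAγ : (0:ℝ) < (g x * x / x ^ (2 * n - 1)) ^ γ := Real.rpow_pos_of_pos hA γ
    simp only [Pi.div_apply]
    have hxn : x ^ (2 * n) ≠ 0 := by positivity
    field_simp
  have hconst : q ^ γ * b n / c n ^ γ
      = D * ((q ^ 2 / (2 * (n : ℝ) ^ 2)) ^ n / a n) ^ ((1 : ℝ) / D) := by
    have hy : (0:ℝ) < a n / 2 ^ n := by positivity
    have hγ1D : γ = (2 * (n:ℝ)) * ((1:ℝ) / D) := by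
      rw [hγdef]
      ring
    have e1 : q ^ γ = ((q ^ (2 * n) : ℝ)) ^ ((1:ℝ) / D) := by
      rw [← Real.rpow_natCast q (2 * n), ← Real.rpow_mul hq.le]
      congr 1
      push_cast
      rw [hγdef]
      ring
    have e2 : c n ^ γ = ((c n ^ (2 * n) : ℝ)) ^ ((1:ℝ) / D) := by
      rw [← Real.rpow_natCast (c n) (2 * n), ← Real.rpow_mul hcn.le]
      congr 1
      push_cast
      rw [hγdef]
      ring
    have e3 : b n = D * (((a n / 2 ^ n) ^ (2 * n - 1) : ℝ)) ^ ((1:ℝ) / D) := by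
      have h4 : (((a n / 2 ^ n) ^ (2 * n - 1) : ℝ)) ^ ((1:ℝ) / D) = a n / 2 ^ n := by
        rw [← Real.rpow_natCast (a n / 2 ^ n) (2 * n - 1), ← Real.rpow_mul hy.le, hcastD,
          mul_one_div_cancel hD.ne', Real.rpow_one]
      rw [h4]
      simp only [hbdef, hDdef]
      ring
    rw [e1, e2, e3]
    have e4 : ((q ^ (2 * n)) : ℝ) ^ ((1:ℝ)/D) * (D * ((a n / 2 ^ n) ^ (2 * n - 1)) ^ ((1:ℝ)/D))
          / (c n ^ (2 * n)) ^ ((1:ℝ)/D)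
        = D * ((q ^ (2 * n) * (a n / 2 ^ n) ^ (2 * n - 1) / c n ^ (2 * n)) ^ ((1:ℝ)/D)) := by
      rw [Real.div_rpow (by positivity) (by positivity),
        Real.mul_rpow (by positivity) (by positivity)]
      ring
    rw [e4]
    congr 2
    simp only [hcdef]
    obtain ⟨p, hp⟩ : ∃ p, n = p + 1 := ⟨n - 1, by omega⟩
    have hanne : a n ≠ 0 := han.ne'
    rw [hp] at hanne ⊢
    rw [show 2 * (p + 1) - 1 = 2 * p + 1 from by omega,
      show (p + 1) - 1 = p from by omega,
      show 2 * (p + 1) = 2 * p + 2 from by omega]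
    push_cast
    have hp1 : ((p:ℝ) + 1) ≠ 0 := by positivity
    simp only [div_pow, mul_pow, ← pow_mul]
    field_simp
    ring
  refine ⟨part1, ?_⟩
  have := (hψlim.comp hEtop)
  rw [hconst] at this
  refine this.congr' ?_
  filter_upwards [self_mem_nhdsWithin] with r hr
  exact (hψE r hr).symm
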